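/- For -ν < u_3 < u_2 < u_1, the integral I(u_1,u_2,u_3) = ∫_{u_3}^{u_2} (η + ν)/√((η + ν)(u_1 - η)(u_2 - η)(η - u_3)) dη equals 2(u_3 + ν)Π(ρ, s)/√((u_1 - u_3)(u_2 + ν)), where ρ = (u_2 - u_3)/(u_2 + ν), s = (u_2 - u_3)(u_1 + ν)/((u_1 - u_3)(u_2 + ν)), and Π is the complete elliptic integral of the third kind. -/

import Mathlib

set_option maxHeartbeats 2000000


open Real Filter Topology Set

/-- Complete elliptic integral of the third kind (parameter = modulus squared). -/
noncomputable def Pel (ρ s : ℝ) : ℝ :=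
  ∫ θ in (0:ℝ)..(π / 2),
    1 / ((1 - ρ * Real.sin θ ^ 2) * Real.sqrt (1 - s * Real.sin θ ^ 2))


namespace CHIaux

/-- The substitution map. -/
noncomputable def F (ν u2 u3 θ : ℝ) : ℝ :=
  (u3*(u2+ν) + ν*(u2-u3)*Real.sin θ^2) / ((u2+ν) - (u2-u3)*Real.sin θ^2)

/-- Its derivative. -/
noncomputable def F' (ν u2 u3 θ : ℝ) : ℝ :=
  2*(u2+ν)*(u2-u3)*(u3+ν)*(Real.sin θ*Real.cos θ) / ((u2+ν) - (u2-u3)*Real.sin θ^2)^2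

variable {ν u1 u2 u3 : ℝ}

lemma den_pos (h3 : -ν < u3) (h32 : u3 < u2) (θ : ℝ) :
    0 < (u2+ν) - (u2-u3)*Real.sin θ^2 := by
  nlinarith [Real.sin_sq_le_one θ, sq_nonneg (Real.sin θ)]

lemma hasDerivAt_F (h3 : -ν < u3) (h32 : u3 < u2) (θ : ℝ) :
    HasDerivAt (F ν u2 u3) (F' ν u2 u3 θ) θ := by
  have hd := den_pos h3 h32 θ
  have hs : HasDerivAt (fun θ => Real.sin θ ^ 2) (2*Real.sin θ*Real.cos θ) θ := by
    simpa [mul_comm, mul_assoc] using (Real.hasDerivAt_sin θ).fun_pow 2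
  have hnum : HasDerivAt (fun θ => u3*(u2+ν) + ν*(u2-u3)*Real.sin θ^2)
      (ν*(u2-u3)*(2*Real.sin θ*Real.cos θ)) θ := ((hs.const_mul (ν*(u2-u3)))).const_add _
  have hden : HasDerivAt (fun θ => (u2+ν) - (u2-u3)*Real.sin θ^2)
      (-((u2-u3)*(2*Real.sin θ*Real.cos θ))) θ := ((hs.const_mul (u2-u3))).const_sub _
  have := hnum.div hden hd.ne'
  refine this.congr_deriv ?_
  unfold F'
  field_simp
  ring

lemma F_zero (h3 : -ν < u3) (h32 : u3 < u2) : F ν u2 u3 0 = u3 := by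
  have hA : (0:ℝ) < u2 + ν := by linarith
  simp [F, hA.ne']

lemma F_pi_div_two (h3 : -ν < u3) (h32 : u3 < u2) : F ν u2 u3 (π/2) = u2 := by
  have hC : (0:ℝ) < u3 + ν := by linarith
  have : (u2+ν) - (u2-u3)*Real.sin (π/2)^2 = u3 + ν := by
    rw [Real.sin_pi_div_two]; ring
  rw [F, this]
  rw [Real.sin_pi_div_two]
  field_simp
  ring

lemma F'_pos (h3 : -ν < u3) (h32 : u3 < u2) {θ : ℝ} (hθ : θ ∈ Ioo 0 (π/2)) :
    0 < F' ν u2 u3 θ := by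
  have hsin : 0 < Real.sin θ :=
    Real.sin_pos_of_pos_of_lt_pi hθ.1 (hθ.2.trans (by linarith [Real.pi_pos]))
  have hcos : 0 < Real.cos θ :=
    Real.cos_pos_of_mem_Ioo ⟨by linarith [Real.pi_pos, hθ.1], hθ.2⟩
  have hd := den_pos h3 h32 θ
  unfold F'
  have hA : (0:ℝ) < u2+ν := by linarith
  have hB : (0:ℝ) < u2-u3 := by linarith
  have hC : (0:ℝ) < u3+ν := by linarith
  apply div_pos (by nlinarith [mul_pos (mul_pos (mul_pos hA hB) hC) (mul_pos hsin hcos)])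
    (by positivity)

lemma F_mono (h3 : -ν < u3) (h32 : u3 < u2) :
    StrictMonoOn (F ν u2 u3) (Icc 0 (π/2)) := by
  apply strictMonoOn_of_deriv_pos (convex_Icc _ _)
  · exact fun θ _ => (hasDerivAt_F h3 h32 θ).continuousAt.continuousWithinAt
  · intro θ hθ
    rw [interior_Icc] at hθ
    rw [(hasDerivAt_F h3 h32 θ).deriv]
    exact F'_pos h3 h32 hθ

lemma rho_term_pos (h3 : -ν < u3) (h32 : u3 < u2) (θ : ℝ) :
    0 < 1 - (u2 - u3) / (u2 + ν) * Real.sin θ^2 := by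
  have hA : (0:ℝ) < u2+ν := by linarith
  have hB : (0:ℝ) < u2-u3 := by linarith
  have hst1 : Real.sin θ^2 ≤ 1 := Real.sin_sq_le_one θ
  have e1 : (u2-u3)/(u2+ν) * Real.sin θ^2 ≤ (u2-u3)/(u2+ν) * 1 :=
    mul_le_mul_of_nonneg_left hst1 (div_nonneg hB.le hA.le)
  have e2 : (u2-u3)/(u2+ν) < 1 := by rw [div_lt_one hA]; linarith
  linarith

lemma s_term_pos (h3 : -ν < u3) (h32 : u3 < u2) (h21 : u2 < u1) (θ : ℝ) :
    0 < 1 - (u2 - u3) * (u1 + ν) / ((u1 - u3) * (u2 + ν)) * Real.sin θ^2 := by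
  have hA : (0:ℝ) < u2+ν := by linarith
  have hB : (0:ℝ) < u2-u3 := by linarith
  have hD : (0:ℝ) < u1-u3 := by linarith
  have hE : (0:ℝ) < u1+ν := by linarith
  have hst1 : Real.sin θ^2 ≤ 1 := Real.sin_sq_le_one θ
  have hslt : (u2-u3)*(u1+ν) < (u1-u3)*(u2+ν) := by nlinarith
  have e1 : (u2-u3)*(u1+ν)/((u1-u3)*(u2+ν)) * Real.sin θ^2
      ≤ (u2-u3)*(u1+ν)/((u1-u3)*(u2+ν)) * 1 :=
    mul_le_mul_of_nonneg_left hst1 (div_nonneg (mul_pos hB hE).le (mul_pos hD hA).le)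
  have e2 : (u2-u3)*(u1+ν)/((u1-u3)*(u2+ν)) < 1 := by
    rw [div_lt_one (mul_pos hD hA)]; exact hslt
  linarith

lemma key (h3 : -ν < u3) (h32 : u3 < u2) (h21 : u2 < u1) {θ : ℝ} (hθ : θ ∈ Ioo 0 (π/2)) :
    F' ν u2 u3 θ * ((F ν u2 u3 θ + ν) /
        Real.sqrt ((F ν u2 u3 θ + ν) * (u1 - F ν u2 u3 θ) * (u2 - F ν u2 u3 θ) *
          (F ν u2 u3 θ - u3)))
      = 2*(u3+ν) / Real.sqrt ((u1-u3)*(u2+ν)) *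
        (1 / ((1 - (u2 - u3) / (u2 + ν) * Real.sin θ^2) *
          Real.sqrt (1 - (u2 - u3) * (u1 + ν) / ((u1 - u3) * (u2 + ν)) * Real.sin θ^2))) := by
  have hA : (0:ℝ) < u2+ν := by linarith
  have hB : (0:ℝ) < u2-u3 := by linarith
  have hC : (0:ℝ) < u3+ν := by linarith
  have hD : (0:ℝ) < u1-u3 := by linarith
  have hd := den_pos h3 h32 θ
  have hsin : 0 < Real.sin θ :=
    Real.sin_pos_of_pos_of_lt_pi hθ.1 (hθ.2.trans (by linarith [Real.pi_pos]))
  have hcos : 0 < Real.cos θ :=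
    Real.cos_pos_of_mem_Ioo ⟨by linarith [Real.pi_pos, hθ.1], hθ.2⟩
  have hst1 : Real.sin θ^2 ≤ 1 := Real.sin_sq_le_one θ
  have hpyth : Real.cos θ^2 = 1 - Real.sin θ^2 := Real.cos_sq' θ
  have hE : (0:ℝ) < u1+ν := by linarith
  have hslt : (u2-u3)*(u1+ν) < (u1-u3)*(u2+ν) := by nlinarith
  have hs1 : 0 < 1 - (u2 - u3) * (u1 + ν) / ((u1 - u3) * (u2 + ν)) * Real.sin θ^2 := by
    have e1 : (u2-u3)*(u1+ν)/((u1-u3)*(u2+ν)) * Real.sin θ^2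
        ≤ (u2-u3)*(u1+ν)/((u1-u3)*(u2+ν)) * 1 :=
      mul_le_mul_of_nonneg_left hst1 (div_nonneg (mul_pos hB hE).le (mul_pos hD hA).le)
    have e2 : (u2-u3)*(u1+ν)/((u1-u3)*(u2+ν)) < 1 := by
      rw [div_lt_one (mul_pos hD hA)]; exact hslt
    linarith
  have hρ1 : 0 < 1 - (u2 - u3) / (u2 + ν) * Real.sin θ^2 := by
    have e1 : (u2-u3)/(u2+ν) * Real.sin θ^2 ≤ (u2-u3)/(u2+ν) * 1 :=
      mul_le_mul_of_nonneg_left hst1 (div_nonneg hB.le hA.le)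
    have e2 : (u2-u3)/(u2+ν) < 1 := by rw [div_lt_one hA]; linarith
    linarith
  have h1 : F ν u2 u3 θ + ν = (u2+ν)*(u3+ν) / ((u2+ν) - (u2-u3)*Real.sin θ^2) := by
    rw [F]; field_simp; ring
  have h2 : u1 - F ν u2 u3 θ = ((u1-u3)*(u2+ν)) *
      (1 - (u2 - u3) * (u1 + ν) / ((u1 - u3) * (u2 + ν)) * Real.sin θ^2)
        / ((u2+ν) - (u2-u3)*Real.sin θ^2) := by
    rw [F]; field_simp; ring
  have h4 : u2 - F ν u2 u3 θ = (u2+ν)*(u2-u3)*Real.cos θ^2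
      / ((u2+ν) - (u2-u3)*Real.sin θ^2) := by
    rw [F, hpyth]; field_simp; ring
  have h5 : F ν u2 u3 θ - u3 = (u2-u3)*(u3+ν)*Real.sin θ^2
      / ((u2+ν) - (u2-u3)*Real.sin θ^2) := by
    rw [F]; field_simp; ring
  set X := Real.sqrt ((u1-u3)*(u2+ν)) with hX
  set Y := Real.sqrt (1 - (u2 - u3) * (u1 + ν) / ((u1 - u3) * (u2 + ν)) * Real.sin θ^2) with hY
  have hXpos : 0 < X := Real.sqrt_pos.mpr (mul_pos hD hA)
  have hYpos : 0 < Y := Real.sqrt_pos.mpr hs1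
  have hX2 : X^2 = (u1-u3)*(u2+ν) := Real.sq_sqrt (mul_pos hD hA).le
  have hY2 : Y^2 = 1 - (u2 - u3) * (u1 + ν) / ((u1 - u3) * (u2 + ν)) * Real.sin θ^2 :=
    Real.sq_sqrt hs1.le
  set Q := ((u2+ν)*(u2-u3)*(u3+ν)*(Real.sin θ*Real.cos θ)
      / ((u2+ν) - (u2-u3)*Real.sin θ^2)^2) * (X * Y) with hQ
  have hQpos : 0 < Q := by
    apply mul_pos (div_pos _ (by positivity)) (mul_pos hXpos hYpos)
    exact mul_pos (mul_pos (mul_pos hA hB) hC) (mul_pos hsin hcos)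
  have hP : (F ν u2 u3 θ + ν) * (u1 - F ν u2 u3 θ) * (u2 - F ν u2 u3 θ) *
      (F ν u2 u3 θ - u3) = Q^2 := by
    have hQ2 : Q^2 = ((u2+ν)*(u2-u3)*(u3+ν))^2 * Real.sin θ^2 * Real.cos θ^2
        / ((u2+ν) - (u2-u3)*Real.sin θ^2)^4 * X^2 * Y^2 := by
      rw [hQ]; field_simp
    rw [h1, h2, h4, h5, hQ2, hX2, hY2, hpyth]
    set t := Real.sin θ^2 with ht
    set a := u2+ν with ha'
    set b := u2-u3 with hb'
    set c := u3+ν with hc'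
    set d4 := u1-u3 with hd4'
    set e := u1+ν with he'
    have hne1 : a - b*t ≠ 0 := hd.ne'
    have hne2 : a ≠ 0 := hA.ne'
    have hne3 : d4 ≠ 0 := hD.ne'
    clear_value t a b c d4 e
    field_simp
  rw [hP, Real.sqrt_sq hQpos.le, h1]
  simp only [F']
  rw [hQ]
  set t := Real.sin θ^2 with ht
  set sc := Real.sin θ * Real.cos θ with hsc
  set a := u2+ν with ha'
  set b := u2-u3 with hb'
  set c := u3+ν with hc'
  set d4 := u1-u3 with hd4'
  set e := u1+ν with he'
  have hscpos : 0 < sc := mul_pos hsin hcos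
  have hne1 : a - b*t ≠ 0 := hd.ne'
  have hne2 : a ≠ 0 := hA.ne'
  have hne3 : d4 ≠ 0 := hD.ne'
  have hne4 : X ≠ 0 := hXpos.ne'
  have hne5 : Y ≠ 0 := hYpos.ne'
  have hne6 : sc ≠ 0 := hscpos.ne'
  have hne7 : 1 - b/a*t ≠ 0 := hρ1.ne'
  clear_value t sc a b c d4 e X Y
  field_simp

end CHIaux

open CHIaux MeasureTheory

/-- For `-ν < u_3 < u_2 < u_1`,
`∫_{u_3}^{u_2} (η+ν)/√((η+ν)(u_1-η)(u_2-η)(η-u_3)) dη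
  = 2(u_3+ν) Π(ρ,s)/√((u_1-u_3)(u_2+ν))`,
with `ρ = (u_2-u_3)/(u_2+ν)` and `s = (u_2-u_3)(u_1+ν)/((u_1-u_3)(u_2+ν))`. -/
theorem CHI_eq_Pi (ν u1 u2 u3 : ℝ) (h3 : -ν < u3) (h32 : u3 < u2) (h21 : u2 < u1) :
    (∫ η in u3..u2, (η + ν) / Real.sqrt ((η + ν) * (u1 - η) * (u2 - η) * (η - u3)))
      = 2 * (u3 + ν) *
          Pel ((u2 - u3) / (u2 + ν)) ((u2 - u3) * (u1 + ν) / ((u1 - u3) * (u2 + ν)))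
        / Real.sqrt ((u1 - u3) * (u2 + ν)) := by
  have hA : (0:ℝ) < u2+ν := by linarith
  have hC : (0:ℝ) < u3+ν := by linarith
  have hD : (0:ℝ) < u1-u3 := by linarith
  have hpi2 : (0:ℝ) ≤ π/2 := by positivity
  set g : ℝ → ℝ := fun η => (η + ν) / Real.sqrt ((η + ν) * (u1 - η) * (u2 - η) * (η - u3))
    with hg
  set h : ℝ → ℝ := fun θ => 2*(u3+ν) / Real.sqrt ((u1-u3)*(u2+ν)) *
      (1 / ((1 - (u2 - u3) / (u2 + ν) * Real.sin θ^2) *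
        Real.sqrt (1 - (u2 - u3) * (u1 + ν) / ((u1 - u3) * (u2 + ν)) * Real.sin θ^2))) with hh
  have hcont : Continuous h := by
    rw [hh]
    apply continuous_const.mul
    apply continuous_const.div
    · fun_prop
    · intro θ
      exact (mul_pos (rho_term_pos h3 h32 θ)
        (Real.sqrt_pos.mpr (s_term_pos h3 h32 h21 θ))).ne'
  have hmin : min (0:ℝ) (π/2) = 0 := min_eq_left hpi2
  have hmax : max (0:ℝ) (π/2) = π/2 := max_eq_right hpi2
  have huIcc : Set.uIcc (0:ℝ) (π/2) = Icc 0 (π/2) := uIcc_of_le hpi2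
  have hFcont : ContinuousOn (F ν u2 u3) (Set.uIcc 0 (π/2)) :=
    fun x _ => (hasDerivAt_F h3 h32 x).continuousAt.continuousWithinAt
  have himg : F ν u2 u3 '' Ioo 0 (π/2) ⊆ Ioo u3 u2 := by
    rintro _ ⟨x, hx, rfl⟩
    have hx1 : (0:ℝ) ∈ Icc (0:ℝ) (π/2) := ⟨le_refl _, hpi2⟩
    have hx2 : x ∈ Icc (0:ℝ) (π/2) := ⟨hx.1.le, hx.2.le⟩
    have hx3 : π/2 ∈ Icc (0:ℝ) (π/2) := ⟨hpi2, le_refl _⟩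
    constructor
    · have := F_mono h3 h32 hx1 hx2 hx.1
      rwa [F_zero h3 h32] at this
    · have := F_mono h3 h32 hx2 hx3 hx.2
      rwa [F_pi_div_two h3 h32] at this
  have hgcont : ContinuousOn g (Ioo u3 u2) := by
    rw [hg]
    apply ContinuousOn.div
    · fun_prop
    · fun_prop
    · intro x hx
      refine (Real.sqrt_pos.mpr ?_).ne'
      have e1 : 0 < x + ν := by linarith [hx.1]
      have e2 : 0 < u1 - x := by linarith [hx.2]
      have e3 : 0 < u2 - x := by linarith [hx.2]
      have e4 : 0 < x - u3 := by linarith [hx.1]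
      exact mul_pos (mul_pos (mul_pos e1 e2) e3) e4
  -- the eq-on-Ioo between h and the pulled back integrand
  have heqon : ∀ x ∈ Ioo (0:ℝ) (π/2), F' ν u2 u3 x * g (F ν u2 u3 x) = h x := by
    intro x hx
    rw [hg, hh]
    exact key h3 h32 h21 hx
  -- integrability of |F'| • g ∘ F on Icc
  have hint : IntegrableOn (fun x => |F' ν u2 u3 x| • g (F ν u2 u3 x)) (Icc 0 (π/2)) := by
    rw [integrableOn_Icc_iff_integrableOn_Ioo]
    apply ((hcont.integrableOn_Icc (a := 0) (b := π/2)).mono_set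
      Ioo_subset_Icc_self).congr_fun ?_ measurableSet_Ioo
    intro x hx
    show h x = |F' ν u2 u3 x| • g (F ν u2 u3 x)
    rw [smul_eq_mul, abs_of_pos (F'_pos h3 h32 hx)]
    exact (heqon x hx).symm
  have hg1 : IntegrableOn g (F ν u2 u3 '' Set.uIcc 0 (π/2)) := by
    rw [huIcc]
    rw [MeasureTheory.integrableOn_image_iff_integrableOn_abs_deriv_smul measurableSet_Icc
      (fun x _ => (hasDerivAt_F h3 h32 x).hasDerivWithinAt) (F_mono h3 h32).injOn g]
    exact hint
  have hg2 : IntegrableOn (fun x => F' ν u2 u3 x • (g ∘ F ν u2 u3) x) (Set.uIcc 0 (π/2)) := by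
    rw [huIcc, integrableOn_Icc_iff_integrableOn_Ioo]
    apply ((hcont.integrableOn_Icc (a := 0) (b := π/2)).mono_set
      Ioo_subset_Icc_self).congr_fun ?_ measurableSet_Ioo
    intro x hx
    show h x = F' ν u2 u3 x • (g ∘ F ν u2 u3) x
    rw [smul_eq_mul, Function.comp_apply]
    exact (heqon x hx).symm
  have hsub := intervalIntegral.integral_comp_smul_deriv''' (a := 0) (b := π/2)
    (f := F ν u2 u3) (f' := F' ν u2 u3) (g := g) hFcont
    (fun x _ => (hasDerivAt_F h3 h32 x).hasDerivWithinAt)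
    (by rw [hmin, hmax]; exact hgcont.mono himg) hg1 hg2
  rw [F_zero h3 h32, F_pi_div_two h3 h32] at hsub
  have heq2 : (∫ x in (0:ℝ)..(π/2), F' ν u2 u3 x • (g ∘ F ν u2 u3) x)
      = ∫ x in (0:ℝ)..(π/2), h x := by
    apply intervalIntegral.integral_congr_ae
    rw [MeasureTheory.ae_iff]
    refine measure_mono_null (fun x hx => ?_) (measure_singleton (π/2 : ℝ))
    simp only [Set.mem_setOf_eq, Classical.not_imp] at hx
    obtain ⟨hmem, hne⟩ := hx
    rw [Set.uIoc_of_le hpi2] at hmem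
    by_contra hne'
    have hlt : x < π/2 := lt_of_le_of_ne hmem.2 (by simpa using hne')
    exact hne (by
      show F' ν u2 u3 x • (g ∘ F ν u2 u3) x = h x
      rw [smul_eq_mul, Function.comp_apply]
      exact heqon x ⟨hmem.1, hlt⟩)
  calc (∫ η in u3..u2, g η)
      = ∫ x in (0:ℝ)..(π/2), F' ν u2 u3 x • (g ∘ F ν u2 u3) x := hsub.symm
    _ = ∫ x in (0:ℝ)..(π/2), h x := heq2
    _ = (2*(u3+ν)/Real.sqrt ((u1-u3)*(u2+ν))) *
          Pel ((u2 - u3) / (u2 + ν)) ((u2 - u3) * (u1 + ν) / ((u1 - u3) * (u2 + ν))) := by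
        rw [hh, Pel, ← intervalIntegral.integral_const_mul]
    _ = 2 * (u3 + ν) *
          Pel ((u2 - u3) / (u2 + ν)) ((u2 - u3) * (u1 + ν) / ((u1 - u3) * (u2 + ν)))
        / Real.sqrt ((u1 - u3) * (u2 + ν)) := div_mul_eq_mul_div _ _ _
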